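/- arXiv:1112.6382 — 2 statements merged into one kernel-verified Lean document; each statement's English description precedes it below -/
import Mathlib

section
/- If f and g are polynomials that are each nonnegative on ℝⁿ (positive semidefinite polynomials), then the Newton polytope of f is contained in the Newton polytope of f + g: C(f) ⊆ C(f+g). -/
open Filter

lemma coeff_pos_of_sep {n : ℕ} (p : MvPolynomial (Fin n) ℝ)
    (hp : ∀ x : Fin n → ℝ, 0 ≤ MvPolynomial.eval x p)
    (w : Fin n → ℝ) (α : (Fin n) →₀ ℕ) (hα : α ∈ p.support)
    (hsep : ∀ β ∈ p.support, β ≠ α → (∑ i, w i * β i) < ∑ i, w i * α i) :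
    0 < MvPolynomial.coeff α p := by
  set L : ((Fin n) →₀ ℕ) → ℝ := fun β => ∑ i, w i * β i with hLdef
  set F : ℝ → ℝ := fun t => ∑ β ∈ p.support, MvPolynomial.coeff β p * t ^ (L β - L α) with hFdef
  have key : ∀ t : ℝ, 0 < t → 0 ≤ F t := by
    intro t ht
    have h1 : F t = t ^ (-(L α)) * MvPolynomial.eval (fun i => t ^ (w i)) p := by
      rw [MvPolynomial.eval_eq', Finset.mul_sum]
      refine Finset.sum_congr rfl fun β hβ => ?_
      have hprod : (∏ i, (t ^ (w i)) ^ (β i)) = t ^ (L β) := by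
        rw [hLdef]
        rw [Real.rpow_sum_of_pos ht]
        refine Finset.prod_congr rfl fun i _ => ?_
        rw [← Real.rpow_natCast (t ^ (w i)) (β i), ← Real.rpow_mul ht.le]
      rw [hprod, sub_eq_add_neg, Real.rpow_add ht]
      ring
    rw [h1]
    exact mul_nonneg (Real.rpow_nonneg ht.le _) (hp _)
  have hlim : Tendsto F atTop (nhds (MvPolynomial.coeff α p)) := by
    have hval : MvPolynomial.coeff α p
        = ∑ β ∈ p.support, (if β = α then MvPolynomial.coeff α p else 0) := by
      rw [Finset.sum_ite_eq' p.support α (fun _ => MvPolynomial.coeff α p), if_pos hα]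
    rw [hval]
    apply tendsto_finset_sum
    intro β hβ
    by_cases h : β = α
    · subst h
      simp only [if_pos rfl, sub_self]
      simp only [Real.rpow_zero, mul_one]; exact tendsto_const_nhds
    · simp only [if_neg h]
      have hneg : 0 < L α - L β := sub_pos.2 (hsep β hβ h)
      have hrw : (fun t : ℝ => MvPolynomial.coeff β p * t ^ (L β - L α))
          = fun t : ℝ => MvPolynomial.coeff β p * t ^ (-(L α - L β)) := by
        funext t; ring_nf
      rw [hrw]
      simpa using (tendsto_rpow_neg_atTop hneg).const_mul (MvPolynomial.coeff β p)
  have h0 : 0 ≤ MvPolynomial.coeff α p :=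
    ge_of_tendsto hlim ((eventually_gt_atTop 0).mono fun t ht => key t ht)
  exact lt_of_le_of_ne h0 (Ne.symm (MvPolynomial.mem_support_iff.1 hα))

lemma linfun_eq {n : ℕ} (ℓ : (Fin n → ℝ) →L[ℝ] ℝ) (x : Fin n → ℝ) :
    ℓ x = ∑ i, x i * ℓ (Pi.single i 1) := by
  have hx : ∑ i, x i • (Pi.single i (1:ℝ) : Fin n → ℝ) = x := by
    have : ∀ i : Fin n, x i • (Pi.single i (1:ℝ) : Fin n → ℝ) = Pi.single i (x i) := by
      intro i
      rw [← Pi.single_smul]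
      simp
    simp_rw [this]
    exact Finset.univ_sum_single x
  conv_lhs => rw [← hx]
  rw [map_sum]
  simp [smul_eq_mul]

lemma exists_sep {n : ℕ} {M : Set (Fin n → ℝ)} (hM : M.Finite) {a : Fin n → ℝ}
    (ha : a ∈ (convexHull ℝ M).extremePoints ℝ) :
    ∃ w : Fin n → ℝ, ∀ b ∈ M, b ≠ a →
      (∑ i, w i * b i) < ∑ i, w i * a i := by
  have hnot : a ∉ convexHull ℝ (M \ {a}) := by
    have h2 := ((convex_convexHull ℝ M).mem_extremePoints_iff_mem_diff_convexHull_diff.mp ha).2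
    intro hcon
    exact h2 (convexHull_mono (Set.diff_subset_diff_left (subset_convexHull ℝ M)) hcon)
  obtain ⟨ℓ, u, hu, hlt⟩ := geometric_hahn_banach_point_closed
      (convex_convexHull ℝ _) ((hM.diff (t := {a})).isClosed_convexHull (𝕜 := ℝ)) hnot
  refine ⟨fun i => -ℓ (Pi.single i 1), fun b hb hba => ?_⟩
  have hb' : u < ℓ b := hlt b (subset_convexHull ℝ _ ⟨hb, hba⟩)
  have key : ∀ x : Fin n → ℝ, (∑ i, (-ℓ (Pi.single i 1)) * x i) = -ℓ x := by
    intro x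
    rw [linfun_eq ℓ x, ← Finset.sum_neg_distrib]
    exact Finset.sum_congr rfl fun i _ => by ring
  rw [key, key]
  have : ℓ a < ℓ b := hu.trans hb'
  linarith

noncomputable def newtonPolytope {n : ℕ} (p : MvPolynomial (Fin n) ℝ) : Set (Fin n → ℝ) :=
  convexHull ℝ ((fun (α : (Fin n) →₀ ℕ) (i : Fin n) => (α i : ℝ)) '' ↑p.support)

theorem newton_polytope_add_subset (n : ℕ) (f g : MvPolynomial (Fin n) ℝ)
    (hf : ∀ x : Fin n → ℝ, 0 ≤ MvPolynomial.eval x f)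
    (hg : ∀ x : Fin n → ℝ, 0 ≤ MvPolynomial.eval x g) :
    newtonPolytope f ⊆ newtonPolytope (f + g) := by
  classical
  set E : ((Fin n) →₀ ℕ) → (Fin n → ℝ) := fun α i => (α i : ℝ) with hE
  have hEinj : Function.Injective E := by
    intro a b h
    ext i
    exact Nat.cast_injective (congrFun h i)
  set S : Set (Fin n → ℝ) := E '' ↑f.support with hS
  set T : Set (Fin n → ℝ) := E '' ↑(f + g).support with hT
  set M : Set (Fin n → ℝ) := S ∪ T with hM
  have hMfin : M.Finite :=
    (f.support.finite_toSet.image E).union ((f + g).support.finite_toSet.image E)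
  have hext : (convexHull ℝ M).extremePoints ℝ ⊆ T := by
    intro a ha
    by_contra haT
    have haM : a ∈ M := extremePoints_convexHull_subset ha
    have haS : a ∈ S := haM.resolve_right haT
    obtain ⟨α, hαf, rfl⟩ := haS
    rw [Finset.mem_coe] at hαf
    obtain ⟨w, hw⟩ := exists_sep hMfin ha
    have hsepf : ∀ β ∈ f.support, β ≠ α → (∑ i, w i * β i) < ∑ i, w i * α i := by
      intro β hβ hne
      exact hw (E β) (Or.inl ⟨β, by exact_mod_cast hβ, rfl⟩) fun h => hne (hEinj h)
    have hcf : 0 < f.coeff α := coeff_pos_of_sep f hf w α hαf hsepf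
    have hzero : (f + g).coeff α = 0 := by
      by_contra h
      exact haT ⟨α, by exact_mod_cast MvPolynomial.mem_support_iff.2 h, rfl⟩
    have hcg : g.coeff α = -f.coeff α := by
      have h := hzero
      rw [MvPolynomial.coeff_add] at h
      linarith
    have hαg : α ∈ g.support :=
      MvPolynomial.mem_support_iff.2 (by rw [hcg]; exact neg_ne_zero.2 hcf.ne')
    have hsepg : ∀ β ∈ g.support, β ≠ α → (∑ i, w i * β i) < ∑ i, w i * α i := by
      intro β hβ hne
      have hβM : E β ∈ M := by
        by_cases hβf : β ∈ f.support
        · exact Or.inl ⟨β, by exact_mod_cast hβf, rfl⟩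
        · refine Or.inr ⟨β, ?_, rfl⟩
          rw [Finset.mem_coe, MvPolynomial.mem_support_iff, MvPolynomial.coeff_add,
            MvPolynomial.notMem_support_iff.1 hβf, zero_add]
          exact MvPolynomial.mem_support_iff.1 hβ
      exact hw (E β) hβM fun h => hne (hEinj h)
    have hcg' : 0 < g.coeff α := coeff_pos_of_sep g hg w α hαg hsepg
    rw [hcg] at hcg'
    linarith
  have hMT : convexHull ℝ M ⊆ convexHull ℝ T := by
    rw [← closure_convexHull_extremePoints (hMfin.isCompact_convexHull (𝕜 := ℝ)) (convex_convexHull ℝ M)]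
    refine (closure_mono (convexHull_mono hext)).trans ?_
    rw [IsClosed.closure_eq (((f + g).support.finite_toSet.image E).isClosed_convexHull (𝕜 := ℝ))]
  show convexHull ℝ S ⊆ convexHull ℝ T
  exact (convexHull_mono Set.subset_union_left).trans hMT
end

section
/- If a polynomial f is a sum of squares, f = Σⱼ gⱼ², then for each j the Newton polytope of gⱼ is contained in half of the Newton polytope of f: C(gⱼ) ⊆ (1/2)·C(f). -/
open Pointwise

theorem newton_polytope_sos (n k : ℕ) (f : MvPolynomial (Fin n) ℝ)
    (g : Fin k → MvPolynomial (Fin n) ℝ) (hf : f = ∑ j, (g j) ^ 2) :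
    ∀ j, newtonPolytope (g j) ⊆ ((1 / 2 : ℝ) • newtonPolytope f : Set (Fin n → ℝ)) := by
  classical
  intro j
  set e : ((Fin n) →₀ ℕ) → (Fin n → ℝ) := fun α i => (α i : ℝ) with he
  have einj : Function.Injective e := by
    intro a b h
    ext i
    have := congrFun h i
    simp only [he] at this
    exact_mod_cast this
  set S : Finset ((Fin n) →₀ ℕ) := Finset.univ.biUnion (fun j => (g j).support) with hS
  set T : Set (Fin n → ℝ) := e '' ↑S with hT
  have hTfin : T.Finite := (S.finite_toSet.image _)
  have hNfcomp : IsCompact (newtonPolytope f) :=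
    ((f.support.finite_toSet.image _)).isCompact_convexHull ℝ
  have htgt_convex : Convex ℝ ((1/2:ℝ) • newtonPolytope f) :=
    (convex_convexHull ℝ _).smul _
  have htgt_closed : IsClosed ((1/2:ℝ) • newtonPolytope f) := by
    have : IsCompact ((1/2:ℝ) • newtonPolytope f) := by
      rw [← Set.image_smul]
      exact hNfcomp.image (continuous_const_smul _)
    exact this.isClosed
  have key : (convexHull ℝ T).extremePoints ℝ ⊆ (1/2:ℝ) • newtonPolytope f := by
    intro x hx
    have hxT : x ∈ T := extremePoints_convexHull_subset hx
    obtain ⟨ν, hνS, rfl⟩ := hxT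
    rw [Finset.mem_coe, hS, Finset.mem_biUnion] at hνS
    obtain ⟨j₀, -, hj₀⟩ := hνS
    have hcoeff : ∀ i, MvPolynomial.coeff (ν + ν) ((g i)^2)
        = (MvPolynomial.coeff ν (g i))^2 := by
      intro i
      rw [sq, MvPolynomial.coeff_mul,
        Finset.sum_eq_single_of_mem (ν, ν) (Finset.HasAntidiagonal.mem_antidiagonal.2 rfl)]
      · rw [sq]
      · rintro ⟨β, γ⟩ hmem hne
        by_contra hcc
        have hβ : β ∈ (g i).support := by
          rw [MvPolynomial.mem_support_iff]
          intro h; exact hcc (by simp [h])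
        have hγ : γ ∈ (g i).support := by
          rw [MvPolynomial.mem_support_iff]
          intro h; exact hcc (by simp [h])
        have hβT : e β ∈ convexHull ℝ T :=
          subset_convexHull ℝ T ⟨β, by
            simp only [Finset.mem_coe, hS, Finset.mem_biUnion]
            exact ⟨i, Finset.mem_univ _, hβ⟩, rfl⟩
        have hγT : e γ ∈ convexHull ℝ T :=
          subset_convexHull ℝ T ⟨γ, by
            simp only [Finset.mem_coe, hS, Finset.mem_biUnion]
            exact ⟨i, Finset.mem_univ _, hγ⟩, rfl⟩
        have hsum : β + γ = ν + ν := Finset.HasAntidiagonal.mem_antidiagonal.1 hmem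
        have hmid : e ν = (1/2:ℝ) • e β + (1/2:ℝ) • e γ := by
          funext i'
          have : (β i' : ℝ) + γ i' = (ν i' : ℝ) + ν i' := by
            have := congrArg (fun (d : (Fin n) →₀ ℕ) => d i') hsum
            push_cast [Finsupp.add_apply] at this ⊢
            exact_mod_cast this
          simp only [he, Pi.add_apply, Pi.smul_apply, smul_eq_mul]
          linarith
        have hseg : e ν ∈ openSegment ℝ (e β) (e γ) :=
          ⟨1/2, 1/2, by norm_num, by norm_num, by norm_num, hmid.symm⟩
        obtain ⟨h1, h2⟩ := (mem_extremePoints.1 hx).2 _ hβT _ hγT hseg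
        have hβν : β = ν := einj h1
        have hγν : γ = ν := einj h2
        exact hne (by rw [Prod.ext_iff]; exact ⟨hβν, hγν⟩)
    have hν2 : (ν + ν) ∈ f.support := by
      rw [MvPolynomial.mem_support_iff, hf, MvPolynomial.coeff_sum]
      have hrw : ∑ i, MvPolynomial.coeff (ν+ν) ((g i)^2)
          = ∑ i, (MvPolynomial.coeff ν (g i))^2 :=
        Finset.sum_congr rfl (fun i _ => hcoeff i)
      rw [hrw]
      have hj₀' : MvPolynomial.coeff ν (g j₀) ≠ 0 := MvPolynomial.mem_support_iff.1 hj₀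
      have hpos : 0 < ∑ i, (MvPolynomial.coeff ν (g i))^2 :=
        Finset.sum_pos' (fun i _ => sq_nonneg _)
          ⟨j₀, Finset.mem_univ _, by positivity⟩
      exact hpos.ne'
    refine ⟨e (ν + ν), subset_convexHull ℝ _ ⟨ν + ν, hν2, rfl⟩, ?_⟩
    funext i
    simp only [he, Pi.smul_apply, smul_eq_mul, Finsupp.add_apply]
    push_cast
    ring
  have hsub : newtonPolytope (g j) ⊆ convexHull ℝ T := by
    apply convexHull_mono
    apply Set.image_mono
    intro a ha
    simp only [Finset.mem_coe, hS, Finset.mem_biUnion]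
    exact ⟨j, Finset.mem_univ _, ha⟩
  refine hsub.trans ?_
  have hcomp : IsCompact (convexHull ℝ T) := hTfin.isCompact_convexHull ℝ
  calc convexHull ℝ T
      = closure (convexHull ℝ ((convexHull ℝ T).extremePoints ℝ)) :=
        (closure_convexHull_extremePoints hcomp (convex_convexHull ℝ T)).symm
    _ ⊆ closure ((1/2:ℝ) • newtonPolytope f) :=
        closure_mono (convexHull_min key htgt_convex)
    _ = (1/2:ℝ) • newtonPolytope f := htgt_closed.closure_eq
end
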